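/- Let G be a d-regular hypercube graph Q_d with d ≥ 3. Then χ_s(Q_d) ≥ ⌈(d+5)/2⌉. -/

import Mathlib

set_option maxHeartbeats 1000000

/-- A star colouring: a proper colouring with no bicoloured 4-vertex path. -/
def IsStarColoring {V : Type*} {α : Type*} (G : SimpleGraph V) (f : V → α) : Prop :=
  (∀ ⦃u v : V⦄, G.Adj u v → f u ≠ f v) ∧
  ∀ ⦃a b c d : V⦄, G.Adj a b → G.Adj b c → G.Adj c d →
    a ≠ c → a ≠ d → b ≠ d → ¬(f a = f c ∧ f b = f d)

/-- The d-dimensional hypercube graph. -/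
def hypercube (d : ℕ) : SimpleGraph (Fin d → Bool) :=
  SimpleGraph.fromRel fun x y => (Finset.univ.filter fun i => x i ≠ y i).card = 1

namespace StarProof
open Finset

variable {d : ℕ}

abbrev V (d : ℕ) := Fin d → Bool

def flip (i : Fin d) (x : V d) : V d := Function.update x i (!x i)

@[simp] lemma flip_same (i : Fin d) (x : V d) : flip i x i = !x i := by
  simp [flip]

lemma flip_other {i j : Fin d} (h : j ≠ i) (x : V d) : flip i x j = x j := by
  simp [flip, Function.update_of_ne h]

@[simp] lemma flip_flip (i : Fin d) (x : V d) : flip i (flip i x) = x := by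
  funext j
  by_cases h : j = i
  · subst h; simp
  · rw [flip_other h, flip_other h]

lemma flip_ne (i : Fin d) (x : V d) : flip i x ≠ x := by
  intro h
  have := congrFun h i
  simp at this

lemma flip_comm (i j : Fin d) (x : V d) (h : i ≠ j) : flip i (flip j x) = flip j (flip i x) := by
  funext m
  by_cases hi : m = i
  · subst hi
    rw [flip_same, flip_other h, flip_other h, flip_same]
  · by_cases hj : m = j
    · subst hj
      rw [flip_other hi, flip_same, flip_same, flip_other hi]
    · rw [flip_other hi, flip_other hj, flip_other hj, flip_other hi]

lemma diff_flip (i : Fin d) (x : V d) :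
    (Finset.univ.filter fun m => flip i x m ≠ x m) = {i} := by
  ext m
  simp only [mem_filter, mem_univ, true_and, mem_singleton]
  constructor
  · intro h
    by_contra hm
    exact h (flip_other hm x)
  · intro h; subst h; simp

lemma adj_iff {x y : V d} :
    (hypercube d).Adj x y ↔ (Finset.univ.filter fun i => x i ≠ y i).card = 1 := by
  have hsymm : (Finset.univ.filter fun i => y i ≠ x i) = (Finset.univ.filter fun i => x i ≠ y i) := by
    apply filter_congr; intro i _; simp [ne_comm]
  constructor
  · rintro ⟨hne, h | h⟩
    · exact h
    · rw [← hsymm]; exact h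
  · intro h
    refine ⟨?_, Or.inl h⟩
    intro he; subst he; simp at h

lemma adj_flip (i : Fin d) (x : V d) : (hypercube d).Adj x (flip i x) := by
  rw [adj_iff]
  have : (Finset.univ.filter fun m => x m ≠ flip i x m) = {i} := by
    rw [← diff_flip i x]
    apply filter_congr; intro m _; simp [ne_comm]
  rw [this]; simp

lemma adj_iff_flip {x y : V d} : (hypercube d).Adj x y ↔ ∃ i, y = flip i x := by
  constructor
  · intro h
    rw [adj_iff] at h
    obtain ⟨i0, hi⟩ := Finset.card_eq_one.mp h
    refine ⟨i0, ?_⟩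
    have hmem : ∀ m : Fin d, x m ≠ y m ↔ m = i0 := by
      intro m
      constructor
      · intro hm
        have : m ∈ Finset.univ.filter fun i => x i ≠ y i := by simp [hm]
        rw [hi] at this; simpa using this
      · intro hm; rw [hm]
        have : i0 ∈ Finset.univ.filter fun i => x i ≠ y i := by rw [hi]; simp
        simpa using this
    funext m
    by_cases hm : m = i0
    · subst hm
      have h2 := (hmem m).mpr rfl
      rw [flip_same]
      revert h2
      cases x m <;> cases y m <;> simp
    · rw [flip_other hm]
      have := hmem m
      by_contra hne
      exact hm (this.mp (fun he => hne he.symm))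
  · rintro ⟨i, rfl⟩; exact adj_flip i x

instance : DecidableRel (hypercube d).Adj := fun _ _ => decidable_of_iff' _ adj_iff

def wt (x : V d) : ℕ := (Finset.univ.filter fun i => x i = true).card

def par (x : V d) : Bool := (wt x).bodd

lemma wt_flip (i : Fin d) (x : V d) :
    wt (flip i x) = if x i = true then wt x - 1 else wt x + 1 := by
  unfold wt
  by_cases h : x i = true
  · rw [if_pos h]
    have : (Finset.univ.filter fun m => flip i x m = true)
        = (Finset.univ.filter fun m => x m = true).erase i := by
      ext m
      simp only [mem_filter, mem_univ, true_and, mem_erase]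
      by_cases hm : m = i
      · subst hm; simp [h]
      · rw [flip_other hm]; simp [hm]
    rw [this, card_erase_of_mem (by simp [h])]
  · rw [if_neg h]
    have : (Finset.univ.filter fun m => flip i x m = true)
        = insert i (Finset.univ.filter fun m => x m = true) := by
      ext m
      simp only [mem_filter, mem_univ, true_and, mem_insert]
      by_cases hm : m = i
      · subst hm; simp [h]
      · rw [flip_other hm]; simp [hm]
    rw [this, card_insert_of_notMem (by simp [h])]

lemma par_flip (i : Fin d) (x : V d) : par (flip i x) = !par x := by
  unfold par
  rw [wt_flip]
  by_cases h : x i = true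
  · rw [if_pos h]
    have hpos : 1 ≤ wt x := by
      apply Finset.card_pos.mpr
      exact ⟨i, by simp [h]⟩
    obtain ⟨n, hn⟩ := Nat.exists_eq_add_of_le hpos
    rw [hn]; simp [Nat.bodd_succ]
  · rw [if_neg h]; simp [Nat.bodd_succ]

lemma par_adj {x y : V d} (h : (hypercube d).Adj x y) : par y = !par x := by
  obtain ⟨i, rfl⟩ := adj_iff_flip.mp h
  exact par_flip i x

end StarProof

namespace StarProof
open Finset

variable {d k : ℕ}

lemma bool_eq_not {a b : Bool} (h : a ≠ b) : a = !b := by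
  cases a <;> cases b <;> simp_all

lemma flip_inj {i j : Fin d} {x : V d} (h : flip i x = flip j x) : i = j := by
  by_contra hne
  have := congrFun h i
  rw [flip_same, flip_other hne] at this
  simp at this

lemma flips_ne {i j : Fin d} (h : i ≠ j) (x : V d) : flip i x ≠ flip j x :=
  fun he => h (flip_inj he)

lemma flip_left_inj {i : Fin d} {x y : V d} (h : flip i x = flip i y) : x = y := by
  have := congrArg (flip i) h
  rwa [flip_flip, flip_flip] at this

def nbhd (x : V d) : Finset (V d) := Finset.univ.filter ((hypercube d).Adj x)

lemma mem_nbhd {x u : V d} : u ∈ nbhd x ↔ (hypercube d).Adj x u := by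
  simp [nbhd]

lemma nbhd_eq_image (x : V d) : nbhd x = Finset.univ.image (fun i => flip i x) := by
  ext u
  simp only [mem_nbhd, mem_image, mem_univ, true_and]
  rw [adj_iff_flip]
  constructor
  · rintro ⟨i, rfl⟩; exact ⟨i, rfl⟩
  · rintro ⟨i, rfl⟩; exact ⟨i, rfl⟩

lemma nbhd_card (x : V d) : (nbhd x).card = d := by
  rw [nbhd_eq_image, Finset.card_image_of_injective _ (fun i j h => flip_inj h)]
  simp

variable (f : V d → Fin k)

def cls (x : V d) (c : Fin k) : Finset (V d) := (nbhd x).filter (fun u => f u = c)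

def sing (x : V d) : Finset (V d) := (nbhd x).filter (fun u => (cls f x (f u)).card = 1)

def mono (x : V d) : Finset (V d) := (nbhd x).filter (fun u => ¬ (cls f x (f u)).card = 1)

def inarr (x : V d) : Finset (V d) := (nbhd x).filter (fun v => x ∈ mono f v)

def Dset (x : V d) : Finset (Fin d) := Finset.univ.filter (fun j => flip j x ∈ mono f x)

lemma mem_cls_self {x u : V d} (h : u ∈ nbhd x) : u ∈ cls f x (f u) := by
  simp only [cls, mem_filter]
  exact ⟨h, trivial⟩

lemma mono_two {x u : V d} (h : u ∈ mono f x) : 2 ≤ (cls f x (f u)).card := by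
  simp only [mono, mem_filter] at h
  have h1 : 1 ≤ (cls f x (f u)).card := Finset.card_pos.mpr ⟨u, mem_cls_self f h.1⟩
  omega

lemma exists_partner {x u : V d} (h : u ∈ mono f x) :
    ∃ w, w ∈ nbhd x ∧ w ≠ u ∧ f w = f u := by
  have h2 := mono_two f h
  have hu : u ∈ cls f x (f u) := mem_cls_self f (Finset.mem_of_mem_filter u h)
  have : ((cls f x (f u)).erase u).Nonempty := by
    rw [← Finset.card_pos, Finset.card_erase_of_mem hu]
    omega
  obtain ⟨w, hw⟩ := this
  rw [Finset.mem_erase] at hw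
  obtain ⟨hwu, hwc⟩ := hw
  simp only [cls, mem_filter] at hwc
  exact ⟨w, hwc.1, hwu, hwc.2⟩

lemma sing_union_mono (x : V d) : sing f x ∪ mono f x = nbhd x :=
  Finset.filter_union_filter_not_eq _ _

lemma sing_card_add_mono_card (x : V d) : (sing f x).card + (mono f x).card = d := by
  have := Finset.card_filter_add_card_filter_not (s := nbhd x)
    (p := fun u => (cls f x (f u)).card = 1)
  simpa [sing, mono, nbhd_card] using this

lemma not_mem_sing_and_mono {x u : V d} (h1 : u ∈ sing f x) (h2 : u ∈ mono f x) : False := by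
  simp only [sing, mono, mem_filter] at h1 h2
  exact h2.2 h1.2

lemma mem_mono_of_not_sing {x u : V d} (h : u ∈ nbhd x) (h2 : u ∉ sing f x) : u ∈ mono f x := by
  simp only [sing, mono, mem_filter] at h2 ⊢
  exact ⟨h, fun hc => h2 ⟨h, hc⟩⟩

variable {f}

lemma L1 (hstar : IsStarColoring (hypercube d) f) {v x w y : V d}
    (hvx : (hypercube d).Adj v x) (hvw : (hypercube d).Adj v w) (hxw : x ≠ w)
    (hcol : f x = f w) (hxy : (hypercube d).Adj x y) (hyv : y ≠ v) : f y ≠ f v := by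
  have hyw : y ≠ w := by
    rintro rfl
    have p1 := par_adj hvx
    have p2 := par_adj hvw
    have p3 := par_adj hxy
    rw [p1] at p3
    rw [p3] at p2
    simp at p2
  intro hfyv
  exact hstar.2 hxy.symm hvx.symm hvw hyv hyw hxw ⟨hfyv, hcol⟩

lemma inarr_subset_sing (hstar : IsStarColoring (hypercube d) f) (x : V d) :
    inarr f x ⊆ sing f x := by
  intro v hv
  simp only [inarr, mem_filter] at hv
  obtain ⟨hvn, hvm⟩ := hv
  obtain ⟨w, hwn, hwx, hwc⟩ := exists_partner f hvm
  have hvx : (hypercube d).Adj v x := (mem_nbhd.mp hvn).symm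
  have hvw : (hypercube d).Adj v w := mem_nbhd.mp hwn
  have hcls : cls f x (f v) = {v} := by
    apply Finset.eq_singleton_iff_unique_mem.mpr
    constructor
    · exact mem_cls_self f hvn
    · intro y hy
      simp only [cls, mem_filter] at hy
      by_contra hyv
      exact L1 hstar hvx hvw (Ne.symm hwx) hwc.symm (mem_nbhd.mp hy.1) hyv hy.2
  simp only [sing, mem_filter]
  exact ⟨hvn, by rw [hcls]; simp⟩

end StarProof

namespace StarProof
open Finset

variable {d k : ℕ} {f : (V d) → Fin k}

lemma sum_mono_eq_sum_inarr (f : V d → Fin k) :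
    ∑ x : V d, (mono f x).card = ∑ x : V d, (inarr f x).card := by
  classical
  let B : Finset (V d × V d) := Finset.univ.filter (fun p => p.2 ∈ mono f p.1)
  have h1 : B.card = ∑ x : V d, (mono f x).card := by
    rw [Finset.card_eq_sum_card_fiberwise (f := Prod.fst) (t := Finset.univ)
      (fun p _ => Finset.mem_univ _)]
    apply Finset.sum_congr rfl
    intro x _
    apply Finset.card_bij (fun p _ => p.2)
    · intro p hp
      simp only [B, Finset.mem_filter, Finset.mem_univ, true_and] at hp
      rw [← hp.2]
      exact hp.1
    · intro p hp q hq hpq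
      simp only [B, Finset.mem_filter, Finset.mem_univ, true_and] at hp hq
      exact Prod.ext (hp.2.trans hq.2.symm) hpq
    · intro u hu
      exact ⟨(x, u), by simp [B, hu], rfl⟩
  have h2 : B.card = ∑ x : V d, (inarr f x).card := by
    rw [Finset.card_eq_sum_card_fiberwise (f := Prod.snd) (t := Finset.univ)
      (fun p _ => Finset.mem_univ _)]
    apply Finset.sum_congr rfl
    intro u _
    apply Finset.card_bij (fun p _ => p.1)
    · intro p hp
      simp only [B, Finset.mem_filter, Finset.mem_univ, true_and] at hp
      simp only [inarr, Finset.mem_filter]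
      constructor
      · rw [mem_nbhd]
        have : p.2 ∈ nbhd p.1 := Finset.mem_of_mem_filter _ hp.1
        rw [mem_nbhd] at this
        rw [← hp.2]
        exact this.symm
      · rw [← hp.2]; exact hp.1
    · intro p hp q hq hpq
      simp only [B, Finset.mem_filter, Finset.mem_univ, true_and] at hp hq
      exact Prod.ext hpq (hp.2.trans hq.2.symm)
    · intro v hv
      simp only [inarr, Finset.mem_filter] at hv
      exact ⟨(v, u), by simp [B, hv.2], rfl⟩
  rw [← h1, h2]

lemma image_nbhd_card_le (hstar : IsStarColoring (hypercube d) f) (x : V d) :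
    ((nbhd x).image f).card + 1 ≤ k := by
  have hsub : (nbhd x).image f ⊆ Finset.univ.erase (f x) := by
    intro c hc
    obtain ⟨u, hu, rfl⟩ := Finset.mem_image.mp hc
    exact Finset.mem_erase.mpr ⟨(hstar.1 (mem_nbhd.mp hu)).symm, Finset.mem_univ _⟩
  have := Finset.card_le_card hsub
  rw [Finset.card_erase_of_mem (Finset.mem_univ _)] at this
  have hk : 0 < k := Fin.pos (f x)
  simp only [Finset.card_univ, Fintype.card_fin] at this
  omega

lemma image_sing_card (x : V d) : ((sing f x).image f).card = (sing f x).card := by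
  apply Finset.card_image_of_injOn
  intro u hu w hw huw
  simp only [Finset.mem_coe, sing, mem_filter] at hu hw
  obtain ⟨c0, hc0⟩ := Finset.card_eq_one.mp hu.2
  have h1 : u ∈ cls f x (f u) := mem_cls_self f hu.1
  have h2 : w ∈ cls f x (f u) := by
    simp only [cls, mem_filter]
    exact ⟨hw.1, huw.symm⟩
  rw [hc0] at h1 h2
  rw [Finset.mem_singleton.mp h1, Finset.mem_singleton.mp h2]

lemma image_disj (x : V d) : Disjoint ((sing f x).image f) ((mono f x).image f) := by
  rw [Finset.disjoint_left]
  intro c hc1 hc2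
  obtain ⟨u, hu, rfl⟩ := Finset.mem_image.mp hc1
  obtain ⟨w, hw, hwc⟩ := Finset.mem_image.mp hc2
  simp only [sing, mem_filter] at hu
  simp only [mono, mem_filter] at hw
  rw [← hwc] at hu
  exact hw.2 hu.2

lemma image_nbhd_split (x : V d) :
    ((nbhd x).image f).card = (sing f x).card + ((mono f x).image f).card := by
  rw [← sing_union_mono f x, Finset.image_union,
    Finset.card_union_of_disjoint (image_disj x), image_sing_card]

lemma two_mul_image_mono_le (x : V d) :
    2 * ((mono f x).image f).card ≤ (mono f x).card := by
  rw [Finset.card_eq_sum_card_image f (mono f x)]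
  rw [two_mul]
  calc ((mono f x).image f).card + ((mono f x).image f).card
      = ∑ _c ∈ (mono f x).image f, 2 := by rw [Finset.sum_const]; ring
    _ ≤ ∑ c ∈ (mono f x).image f, ((mono f x).filter (fun u => f u = c)).card := by
        apply Finset.sum_le_sum
        intro c hc
        obtain ⟨u, hu, rfl⟩ := Finset.mem_image.mp hc
        have h2 : 2 ≤ (cls f x (f u)).card := mono_two f hu
        have hsub : cls f x (f u) ⊆ (mono f x).filter (fun w => f w = f u) := by
          intro y hy
          have hy' := hy
          simp only [cls, mem_filter] at hy'
          have hycls : cls f x (f y) = cls f x (f u) := by rw [hy'.2]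
          have : y ∈ mono f x := by
            simp only [mono, mem_filter]
            refine ⟨hy'.1, ?_⟩
            rw [hycls]
            omega
          simp only [mem_filter]
          exact ⟨this, hy'.2⟩
        calc 2 ≤ (cls f x (f u)).card := h2
          _ ≤ _ := Finset.card_le_card hsub

lemma mono_nonempty (hstar : IsStarColoring (hypercube d) f) (hd : 3 ≤ d)
    (hk : k ≤ (d + 4) / 2) (x : V d) : (mono f x).Nonempty := by
  rw [Finset.nonempty_iff_ne_empty]
  intro hempty
  have h1 := sing_card_add_mono_card f x
  rw [hempty] at h1
  simp at h1
  have h2 := image_nbhd_split (f := f) x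
  rw [hempty] at h2
  simp at h2
  have h3 := image_nbhd_card_le hstar x
  rw [h2, h1] at h3
  omega

lemma sing_card_le (hstar : IsStarColoring (hypercube d) f) (hd : 3 ≤ d)
    (hk : k ≤ (d + 4) / 2) (x : V d) : (sing f x).card + 2 ≤ k := by
  have h1 := image_nbhd_split (f := f) x
  have h2 : 1 ≤ ((mono f x).image f).card :=
    Finset.card_pos.mpr (Finset.image_nonempty.mpr (mono_nonempty hstar hd hk x))
  have h3 := image_nbhd_card_le hstar x
  omega

lemma pointwise_of_sum_le {ι : Type*} {s : Finset ι} {g h : ι → ℕ}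
    (hle : ∀ i ∈ s, g i ≤ h i) (hs : ∑ i ∈ s, h i ≤ ∑ i ∈ s, g i) :
    ∀ i ∈ s, g i = h i := by
  intro i hi
  by_contra hne
  have hlt : g i < h i := lt_of_le_of_ne (hle i hi) hne
  have := Finset.sum_lt_sum hle ⟨i, hi, hlt⟩
  omega

end StarProof

namespace StarProof
open Finset

variable {d k : ℕ} {f : (V d) → Fin k}

lemma mem_sing_of_not_mono {x u : V d} (h : u ∈ nbhd x) (h2 : u ∉ mono f x) :
    u ∈ sing f x := by
  simp only [sing, mono, mem_filter] at h2 ⊢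
  refine ⟨h, ?_⟩
  by_contra hc
  exact h2 ⟨h, hc⟩

lemma orient (hinarr : ∀ x : V d, inarr f x = sing f x) {x y : V d}
    (hxy : (hypercube d).Adj x y) : (y ∈ mono f x ↔ x ∉ mono f y) := by
  constructor
  · intro hym hxm
    have hx_in : x ∈ inarr f y := by
      simp only [inarr, mem_filter, mem_nbhd]
      exact ⟨hxy.symm, hym⟩
    rw [hinarr y] at hx_in
    exact not_mem_sing_and_mono f hx_in hxm
  · intro hxm
    have hx_sing : x ∈ sing f y :=
      mem_sing_of_not_mono (mem_nbhd.mpr hxy.symm) hxm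
    rw [← hinarr y] at hx_sing
    simp only [inarr, mem_filter] at hx_sing
    exact hx_sing.2

lemma mem_Dset {x : V d} {j : Fin d} : j ∈ Dset f x ↔ flip j x ∈ mono f x := by
  simp [Dset]

lemma Dset_card (x : V d) : (Dset f x).card = (mono f x).card := by
  have himg : (Dset f x).image (fun j => flip j x) = mono f x := by
    ext u
    simp only [mem_image, mem_Dset]
    constructor
    · rintro ⟨j, hj, rfl⟩; exact hj
    · intro hu
      have : u ∈ nbhd x := Finset.mem_of_mem_filter _ hu
      obtain ⟨j, rfl⟩ := adj_iff_flip.mp (mem_nbhd.mp this)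
      exact ⟨j, hu, rfl⟩
  rw [← himg]
  rw [Finset.card_image_of_injective _ (fun i j h => flip_inj h)]

lemma Dset_compl_sub
    (hinarr : ∀ x : V d, inarr f x = sing f x)
    (hconst : ∀ x : V d, ∀ u ∈ mono f x, ∀ w ∈ mono f x, f u = f w)
    (hm2 : ∀ x : V d, 2 * (mono f x).card = d) {x : V d} {j : Fin d}
    (hj : j ∈ Dset f x) : Dset f (flip j x) = (Dset f x)ᶜ := by
  have hsub : Dset f (flip j x) ⊆ (Dset f x)ᶜ := by
    intro j' hj'
    rw [Finset.mem_compl]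
    intro hj'x
    by_cases hjj : j' = j
    · subst hjj
      rw [mem_Dset] at hj hj'
      rw [flip_flip] at hj'
      exact (orient hinarr (adj_flip j' x)).mp hj hj'
    · -- j' ≠ j
      set u := flip j x with hu
      set u' := flip j' x with hu'
      set q := flip j' u with hq
      have huu' : u ≠ u' := by
        rw [hu, hu']
        exact flips_ne (fun h => hjj h.symm) x
      have hfu : f u = f u' := by
        apply hconst x
        · exact mem_Dset.mp hj
        · exact mem_Dset.mp hj'x
      have hqu : (hypercube d).Adj q u := by
        have h5 : u = flip j' q := by rw [hq, flip_flip]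
        conv_rhs => rw [h5]
        exact adj_flip j' q
      have hqu' : (hypercube d).Adj q u' := by
        have h5 : q = flip j u' := by
          rw [hq, hu, hu', flip_comm j' j x hjj]
        rw [h5]
        exact (adj_flip j u').symm
      have humono : u ∈ mono f q := by
        have h2 : 2 ≤ (cls f q (f u)).card := by
          have hu_in : u ∈ cls f q (f u) := mem_cls_self f (mem_nbhd.mpr hqu)
          have hu'_in : u' ∈ cls f q (f u) := by
            simp only [cls, mem_filter, mem_nbhd]
            exact ⟨hqu', hfu.symm⟩
          have hsub2 : ({u, u'} : Finset (V d)) ⊆ cls f q (f u) := by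
            intro z hz
            rcases Finset.mem_insert.mp hz with rfl | hz
            · exact hu_in
            · rw [Finset.mem_singleton.mp hz]; exact hu'_in
          calc 2 = ({u, u'} : Finset (V d)).card := by
                rw [Finset.card_insert_of_notMem (by simpa using huu'), Finset.card_singleton]
            _ ≤ _ := Finset.card_le_card hsub2
        simp only [mono, mem_filter, mem_nbhd]
        exact ⟨hqu, by omega⟩
      have hq_not : q ∉ mono f u := (orient hinarr hqu).mp humono
      rw [mem_Dset] at hj'
      exact hq_not hj'
  apply Finset.eq_of_subset_of_card_le hsub
  rw [Finset.card_compl, Dset_card, Dset_card]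
  simp only [Fintype.card_fin]
  have h6 := hm2 x
  have h7 := hm2 (flip j x)
  omega

lemma Dset_flip
    (hinarr : ∀ x : V d, inarr f x = sing f x)
    (hconst : ∀ x : V d, ∀ u ∈ mono f x, ∀ w ∈ mono f x, f u = f w)
    (hm2 : ∀ x : V d, 2 * (mono f x).card = d) (x : V d) (j : Fin d) :
    Dset f (flip j x) = (Dset f x)ᶜ := by
  by_cases hj : j ∈ Dset f x
  · exact Dset_compl_sub hinarr hconst hm2 hj
  · have hjD : j ∈ Dset f (flip j x) := by
      rw [mem_Dset, flip_flip]
      by_contra hq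
      exact hj (mem_Dset.mpr ((orient hinarr (adj_flip j x)).mpr hq))
    have h8 := Dset_compl_sub hinarr hconst hm2 hjD
    rw [flip_flip] at h8
    rw [h8, compl_compl]

lemma wt_zero {x : V d} (h : wt x = 0) : x = (fun _ => false) := by
  funext i
  by_contra hi
  have hxi : x i = true := by revert hi; cases x i <;> simp
  have hmem : i ∈ Finset.univ.filter (fun m => x m = true) := by simp [hxi]
  rw [Finset.card_eq_zero.mp h] at hmem
  simp at hmem

lemma exists_true_of_wt_pos {x : V d} (h : wt x ≠ 0) : ∃ i, x i = true := by
  have hne : (Finset.univ.filter fun i => x i = true).Nonempty := by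
    rw [Finset.nonempty_iff_ne_empty]
    intro he
    exact h (by simp [wt, he])
  obtain ⟨i, hi⟩ := hne
  exact ⟨i, (Finset.mem_filter.mp hi).2⟩

lemma par_false : par (fun _ : Fin d => false) = false := by
  simp [par, wt]

lemma Dset_global
    (hinarr : ∀ x : V d, inarr f x = sing f x)
    (hconst : ∀ x : V d, ∀ u ∈ mono f x, ∀ w ∈ mono f x, f u = f w)
    (hm2 : ∀ x : V d, 2 * (mono f x).card = d) (x : V d) :
    Dset f x = (if par x = false then Dset f (fun _ => false) else (Dset f (fun _ => false))ᶜ) := by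
  set D0 := Dset f (fun _ => false) with hD0
  suffices H : ∀ n : ℕ, ∀ y : V d, wt y = n →
      Dset f y = (if par y = false then D0 else D0ᶜ) from H (wt x) x rfl
  intro n
  induction n with
  | zero =>
    intro y hy
    rw [wt_zero hy, par_false]
    simp [hD0]
  | succ n ih =>
    intro y hy
    obtain ⟨i, hi⟩ := exists_true_of_wt_pos (by omega : wt y ≠ 0)
    have h2 := wt_flip i y
    rw [if_pos hi] at h2
    have hwty' : wt (flip i y) = n := by omega
    have hyy' : y = flip i (flip i y) := by rw [flip_flip]
    conv_lhs => rw [hyy']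
    rw [Dset_flip hinarr hconst hm2, ih (flip i y) hwty', par_flip]
    cases hpy : par y
    · simp
    · simp

end StarProof

namespace StarProof
open Finset

variable {d k : ℕ} {f : (V d) → Fin k}

lemma bool_ne_flip {a b : Bool} (h : a ≠ b) : b = !a := by
  cases a <;> cases b <;> simp_all

lemma star_doubleflip
    (hinarr : ∀ x : V d, inarr f x = sing f x)
    (hconst : ∀ x : V d, ∀ u ∈ mono f x, ∀ w ∈ mono f x, f u = f w)
    (hm2 : ∀ x : V d, 2 * (mono f x).card = d)
    {x : V d} {l l' : Fin d} (hll : l ≠ l')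
    (hl : l ∉ Dset f x) (hl' : l' ∉ Dset f x) :
    f (flip l' (flip l x)) = f x := by
  set p := flip l x with hp
  have hxp : x ∈ mono f p := by
    by_contra hxnot
    exact hl (mem_Dset.mpr ((orient hinarr (adj_flip l x)).mpr hxnot))
  have hl'D : l' ∈ Dset f p := by
    rw [hp, Dset_flip hinarr hconst hm2, Finset.mem_compl]
    exact hl'
  have hq : flip l' p ∈ mono f p := mem_Dset.mp hl'D
  exact hconst p _ hq _ hxp

lemma eq_of_no_diff {x y : V d} (h : (Finset.univ.filter fun m => x m ≠ y m).card = 0) :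
    x = y := by
  funext m
  by_contra hm
  have : m ∈ Finset.univ.filter fun m => x m ≠ y m := by simp [hm]
  rw [Finset.card_eq_zero.mp h] at this
  simp at this

lemma eq_flip_of_diff_singleton {x y : V d} {l : Fin d}
    (hl : x l ≠ y l) (hother : ∀ m, m ≠ l → x m = y m) : y = flip l x := by
  funext m
  by_cases hm : m = l
  · subst hm
    rw [flip_same]
    revert hl
    cases x m <;> cases y m <;> simp
  · rw [flip_other hm, ← hother m hm]

lemma const_side
    (hinarr : ∀ x : V d, inarr f x = sing f x)
    (hconst : ∀ x : V d, ∀ u ∈ mono f x, ∀ w ∈ mono f x, f u = f w)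
    (hm2 : ∀ x : V d, 2 * (mono f x).card = d)
    (b : Bool) (S : Finset (Fin d))
    (hDb : ∀ x : V d, par x = b → Dset f x = S) :
    ∀ x y : V d, par x = b → par y = b → (∀ j ∈ S, x j = y j) → f x = f y := by
  suffices H : ∀ n : ℕ, ∀ x y : V d, par x = b → par y = b → (∀ j ∈ S, x j = y j) →
      (Finset.univ.filter fun m => x m ≠ y m).card = n → f x = f y by
    intro x y hx hy hagree
    exact H _ x y hx hy hagree rfl
  intro n
  induction n using Nat.strong_induction_on with
  | _ n ih =>
    intro x y hx hy hagree hcard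
    rcases Nat.eq_zero_or_pos n with rfl | hpos
    · rw [eq_of_no_diff hcard]
    · have hne : (Finset.univ.filter fun m => x m ≠ y m).Nonempty := by
        rw [← Finset.card_pos, hcard]; exact hpos
      obtain ⟨l, hl⟩ := hne
      have hlx : x l ≠ y l := (Finset.mem_filter.mp hl).2
      have hlS : l ∉ S := fun hc => hlx (hagree l hc)
      have hl2 : ∃ l', l' ∈ (Finset.univ.filter fun m => x m ≠ y m) ∧ l' ≠ l := by
        by_contra hno
        push_neg at hno
        have hsingle : ∀ m, m ≠ l → x m = y m := by
          intro m hm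
          by_contra hmx
          exact hm (hno m (by simp [hmx]))
        have hyx : y = flip l x := eq_flip_of_diff_singleton hlx hsingle
        rw [hyx, par_flip, hx] at hy
        simp at hy
      obtain ⟨l', hl'mem, hl'l⟩ := hl2
      have hl'x : x l' ≠ y l' := (Finset.mem_filter.mp hl'mem).2
      have hl'S : l' ∉ S := fun hc => hl'x (hagree l' hc)
      have hDx : Dset f x = S := hDb x hx
      set x' := flip l' (flip l x) with hx'
      have hfx' : f x' = f x :=
        star_doubleflip hinarr hconst hm2 (fun h => hl'l h.symm)
          (hDx ▸ hlS) (hDx ▸ hl'S)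
      have hparx' : par x' = b := by
        rw [hx', par_flip, par_flip, Bool.not_not, hx]
      have hagree' : ∀ j ∈ S, x' j = y j := by
        intro j hj
        have hjl : j ≠ l := fun h => hlS (h ▸ hj)
        have hjl' : j ≠ l' := fun h => hl'S (h ▸ hj)
        rw [hx', flip_other hjl', flip_other hjl]
        exact hagree j hj
      have hdiff : (Finset.univ.filter fun m => x' m ≠ y m)
          = ((Finset.univ.filter fun m => x m ≠ y m) \ {l, l'}) := by
        ext m
        simp only [Finset.mem_filter, Finset.mem_univ, true_and, Finset.mem_sdiff,
          Finset.mem_insert, Finset.mem_singleton]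
        by_cases hm : m = l
        · subst hm
          rw [hx', flip_other (fun h => hl'l h.symm), flip_same]
          constructor
          · intro hc
            exact absurd (bool_ne_flip hlx).symm hc
          · rintro ⟨-, hc⟩
            exact absurd (Or.inl rfl) hc
        · by_cases hm' : m = l'
          · subst hm'
            rw [hx', flip_same, flip_other hm]
            constructor
            · intro hc
              exact absurd (bool_ne_flip hl'x).symm hc
            · rintro ⟨-, hc⟩
              exact absurd (Or.inr rfl) hc
          · rw [hx', flip_other hm', flip_other hm]
            constructor
            · intro hc; exact ⟨hc, by tauto⟩
            · rintro ⟨hc, -⟩; exact hc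
      have hlt : (Finset.univ.filter fun m => x' m ≠ y m).card < n := by
        rw [hdiff]
        calc ((Finset.univ.filter fun m => x m ≠ y m) \ {l, l'}).card
            < (Finset.univ.filter fun m => x m ≠ y m).card := by
              apply Finset.card_lt_card
              constructor
              · exact Finset.sdiff_subset
              · intro hsub
                have := hsub hl
                rw [Finset.mem_sdiff] at this
                exact this.2 (by simp)
          _ = n := hcard
      rw [← hfx']
      exact ih _ hlt x' y hparx' hy hagree' rfl

end StarProof

namespace StarProof
open Finset

variable {d k : ℕ} {f : (V d) → Fin k}

lemma dist2_side (hstar : IsStarColoring (hypercube d) f)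
    (b : Bool) (S : Finset (Fin d))
    (hCN : ∀ x y : V d, par x = !b → par y = !b → (∀ j, j ∉ S → x j = y j) → f x = f y) :
    ∀ (x : V d) (l l' : Fin d), par x = b → l ∈ S → l' ∈ S → l ≠ l' →
      f x ≠ f (flip l' (flip l x)) := by
  intro x l l' hx hl hl' hll
  set x0 := flip l' x with hx0
  set x2 := flip l x with hx2
  set x3 := flip l' (flip l x) with hx3
  have hc : f x0 = f x2 := by
    apply hCN
    · rw [hx0, par_flip, hx]
    · rw [hx2, par_flip, hx]
    · intro j hj
      have hjl : j ≠ l := fun h => hj (h ▸ hl)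
      have hjl' : j ≠ l' := fun h => hj (h ▸ hl')
      rw [hx0, hx2, flip_other hjl', flip_other hjl]
  have ha1 : (hypercube d).Adj x0 x := (adj_flip l' x).symm
  have ha2 : (hypercube d).Adj x x2 := adj_flip l x
  have ha3 : (hypercube d).Adj x2 x3 := adj_flip l' x2
  have hne1 : x0 ≠ x2 := flips_ne (fun h => hll h.symm) x
  have hne2 : x0 ≠ x3 := by
    rw [hx0, hx3]
    intro h
    exact flip_ne l x (flip_left_inj h).symm
  have hne3 : x ≠ x3 := by
    rw [hx3]
    intro h
    have h9 : flip l' (flip l x) l = x l := by rw [← h]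
    rw [flip_other (i := l') (j := l) hll, flip_same] at h9
    simp at h9
  have := hstar.2 ha1 ha2 ha3 hne1 hne2 hne3
  intro hcontra
  exact this ⟨hc, hcontra⟩

lemma cross_side (hstar : IsStarColoring (hypercube d) f)
    (b : Bool) (S : Finset (Fin d))
    (hCB : ∀ x y : V d, par x = b → par y = b → (∀ j ∈ S, x j = y j) → f x = f y)
    (hCN : ∀ x y : V d, par x = !b → par y = !b → (∀ j, j ∉ S → x j = y j) → f x = f y)
    (hS : S.Nonempty) (hSc : ∃ j, j ∉ S) :
    ∀ u w : V d, par u = b → par w = !b → f u ≠ f w := by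
  intro u w hu hw
  set z : V d := (fun i => if i ∈ S then u i else w i) with hz
  by_cases hpz : par z = b
  · have h1 : f z = f u := by
      apply hCB z u hpz hu
      intro j hj
      rw [hz]; simp [hj]
    obtain ⟨j, hj⟩ := hS
    have h2 : f (flip j z) = f w := by
      apply hCN _ _ (by rw [par_flip, hpz]) hw
      intro m hm
      have hmj : m ≠ j := fun h => hm (h ▸ hj)
      rw [flip_other hmj, hz]
      simp [hm]
    have h3 : f z ≠ f (flip j z) := hstar.1 (adj_flip j z)
    rw [h1, h2] at h3
    exact h3
  · have hpz' : par z = !b := bool_ne_flip (fun h => hpz h.symm) ▸ rfl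
    have hpz2 : par z = !b := by
      cases hb : b <;> cases hpzv : par z <;> simp_all
    have h1 : f z = f w := by
      apply hCN z w hpz2 hw
      intro j hj
      rw [hz]; simp [hj]
    obtain ⟨l, hl⟩ := hSc
    have h2 : f (flip l z) = f u := by
      apply hCB _ _ (by rw [par_flip, hpz2, Bool.not_not]) hu
      intro m hm
      have hml : m ≠ l := fun h => hl (h ▸ hm)
      rw [flip_other hml, hz]
      simp [hm]
    have h3 : f z ≠ f (flip l z) := hstar.1 (adj_flip l z)
    rw [h1, h2] at h3
    exact h3.symm

def PropS (f : V d → Fin k) (b : Bool) (S : Finset (Fin d)) : Prop :=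
  ∀ (x : V d) (l j : Fin d), par x = b → l ∈ S → j ∉ S → f x ≠ f (flip j (flip l x))

lemma clash (hstar : IsStarColoring (hypercube d) f)
    (b : Bool) (S : Finset (Fin d))
    (hCB : ∀ x y : V d, par x = b → par y = b → (∀ j ∈ S, x j = y j) → f x = f y)
    (hCN : ∀ x y : V d, par x = !b → par y = !b → (∀ j, j ∉ S → x j = y j) → f x = f y)
    (h1 : ¬ PropS f b S) (h2 : ¬ PropS f (!b) Sᶜ) : False := by
  unfold PropS at h1 h2
  push_neg at h1 h2
  obtain ⟨x, l, j, hx, hl, hj, hxeq⟩ := h1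
  obtain ⟨y, l2, j2, hy, hl2', hj2', hyeq⟩ := h2
  have hl2 : l2 ∉ S := Finset.mem_compl.mp hl2'
  have hj2 : j2 ∈ S := by
    by_contra hc
    exact hj2' (Finset.mem_compl.mpr hc)
  have hjmem : j ∉ S := hj
  set z : V d := (fun i => if i ∈ S then x i else y i) with hz
  have hll2 : l ≠ l2 := fun h => hl2 (h ▸ hl)
  -- the raw C4 star constraint on the 4-cycle z, flip l z, flip l2 (flip l z), flip l2 z
  have ha1 : (hypercube d).Adj z (flip l z) := adj_flip l z
  have ha2 : (hypercube d).Adj (flip l z) (flip l2 (flip l z)) := adj_flip l2 (flip l z)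
  have ha3 : (hypercube d).Adj (flip l2 (flip l z)) (flip l2 z) := by
    rw [flip_comm l2 l z (fun h => hll2 h.symm)]
    exact (adj_flip l (flip l2 z)).symm
  have hne1 : z ≠ flip l2 (flip l z) := by
    intro h
    have : flip l2 (flip l z) l = z l := by rw [← h]
    rw [flip_other hll2, flip_same] at this
    simp at this
  have hne2 : z ≠ flip l2 z := fun h => flip_ne l2 z h.symm
  have hne3 : flip l z ≠ flip l2 z := flips_ne hll2 z
  have hC4 := hstar.2 ha1 ha2 ha3 hne1 hne2 hne3
  apply hC4
  -- both diagonals are monochromatic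
  have hparz2 : par (flip l2 (flip l z)) = par z := by
    rw [par_flip, par_flip, Bool.not_not]
  by_cases hpz : par z = b
  · constructor
    · -- f z = f (flip l2 (flip l z))
      have e1 : f z = f x := by
        apply hCB z x hpz hx
        intro m hm; rw [hz]; simp [hm]
      have e2 : f (flip l2 (flip l z)) = f (flip j (flip l x)) := by
        apply hCB
        · rw [hparz2, hpz]
        · rw [par_flip, par_flip, Bool.not_not, hx]
        · intro m hm
          have hml2 : m ≠ l2 := fun h => hl2 (h ▸ hm)
          have hmj : m ≠ j := fun h => hjmem (h ▸ hm)
          rw [flip_other hml2, flip_other hmj]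
          by_cases hml : m = l
          · subst hml
            rw [flip_same, flip_same, hz]
            simp [hm]
          · rw [flip_other hml, flip_other hml, hz]
            simp [hm]
      rw [e1, e2, hxeq]
    · -- f (flip l z) = f (flip l2 z)
      have e3 : f (flip l z) = f y := by
        apply hCN
        · rw [par_flip, hpz]
        · exact hy
        · intro m hm
          have hml : m ≠ l := fun h => (h ▸ hm) hl
          rw [flip_other hml, hz]
          simp [hm]
      have e4 : f (flip l2 z) = f (flip j2 (flip l2 y)) := by
        apply hCN
        · rw [par_flip, hpz]
        · rw [par_flip, par_flip, Bool.not_not, hy]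
        · intro m hm
          have hmj2 : m ≠ j2 := fun h => hm (h ▸ hj2)
          rw [flip_other hmj2]
          by_cases hml2 : m = l2
          · subst hml2
            rw [flip_same, flip_same, hz]
            simp [hm]
          · rw [flip_other hml2, flip_other hml2, hz]
            simp [hm]
      rw [e3, e4, ← hyeq]
  · have hpz2 : par z = !b := by
      cases hb : b <;> cases hpzv : par z <;> simp_all
    constructor
    · -- f z = f (flip l2 (flip l z)) via the !b side
      have e1 : f z = f y := by
        apply hCN z y hpz2 hy
        intro m hm; rw [hz]; simp [hm]
      have e2 : f (flip l2 (flip l z)) = f (flip j2 (flip l2 y)) := by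
        apply hCN
        · rw [hparz2, hpz2]
        · rw [par_flip, par_flip, Bool.not_not, hy]
        · intro m hm
          have hmj2 : m ≠ j2 := fun h => hm (h ▸ hj2)
          have hml : m ≠ l := fun h => (h ▸ hm) hl
          rw [flip_other hmj2]
          by_cases hml2 : m = l2
          · subst hml2
            rw [flip_same, flip_other hml, flip_same, hz]
            simp [hm]
          · rw [flip_other hml2, flip_other hml, flip_other hml2, hz]
            simp [hm]
      rw [e1, e2, ← hyeq]
    · -- f (flip l z) = f (flip l2 z) via the b side
      have e3 : f (flip l z) = f (flip j (flip l x)) := by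
        apply hCB
        · rw [par_flip, hpz2, Bool.not_not]
        · rw [par_flip, par_flip, Bool.not_not, hx]
        · intro m hm
          have hmj : m ≠ j := fun h => hjmem (h ▸ hm)
          rw [flip_other hmj]
          by_cases hml : m = l
          · subst hml
            rw [flip_same, flip_same, hz]
            simp [hm]
          · rw [flip_other hml, flip_other hml, hz]
            simp [hm]
      have e4 : f (flip l2 z) = f x := by
        apply hCB
        · rw [par_flip, hpz2, Bool.not_not]
        · exact hx
        · intro m hm
          have hml2 : m ≠ l2 := fun h => hl2 (h ▸ hm)
          rw [flip_other hml2, hz]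
          simp [hm]
      rw [e3, e4, ← hxeq]

end StarProof

namespace StarProof
open Finset

variable {d k : ℕ} {f : (V d) → Fin k}

lemma final_side (hstar : IsStarColoring (hypercube d) f)
    (b : Bool) (S : Finset (Fin d))
    (hCB : ∀ x y : V d, par x = b → par y = b → (∀ j ∈ S, x j = y j) → f x = f y)
    (hCN : ∀ x y : V d, par x = !b → par y = !b → (∀ j, j ∉ S → x j = y j) → f x = f y)
    (hprop : PropS f b S)
    (hS2 : 2 ≤ S.card) (hSc2 : 2 ≤ Sᶜ.card) : S.card + 3 ≤ k := by
  have hCN' : ∀ x y : V d, par x = !(!b) → par y = !(!b) → (∀ j, j ∉ Sᶜ → x j = y j) → f x = f y := by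
    intro x y hx hy hagree
    apply hCB x y (by rwa [Bool.not_not] at hx) (by rwa [Bool.not_not] at hy)
    intro j hj
    exact hagree j (by simp [hj])
  have hdist2B := dist2_side hstar b S hCN
  have hdist2N := dist2_side hstar (!b) Sᶜ hCN'
  have hcross := cross_side hstar b S hCB hCN
    (Finset.card_pos.mp (by omega)) (by
      obtain ⟨j, hj⟩ := Finset.card_pos.mp (show 0 < Sᶜ.card by omega)
      exact ⟨j, Finset.mem_compl.mp hj⟩)
  -- base vertices of each parity
  have hd0 : 0 < d := by
    have h := Finset.card_le_univ S
    rw [Fintype.card_fin] at h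
    omega
  have hx0 : ∃ x₀ : V d, par x₀ = b := by
    cases b
    · exact ⟨(fun _ => false), par_false⟩
    · refine ⟨flip ⟨0, hd0⟩ (fun _ => false), ?_⟩
      rw [par_flip, par_false]
      rfl
  have hy0 : ∃ y₀ : V d, par y₀ = !b := by
    cases b
    · refine ⟨flip ⟨0, hd0⟩ (fun _ => false), ?_⟩
      rw [par_flip, par_false]
    · exact ⟨(fun _ => false), par_false⟩
  obtain ⟨x₀, hx₀⟩ := hx0
  obtain ⟨y₀, hy₀⟩ := hy0
  obtain ⟨jst, hjst'⟩ := Finset.card_pos.mp (show 0 < Sᶜ.card by omega)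
  have hjst : jst ∉ S := Finset.mem_compl.mp hjst'
  obtain ⟨jA, hjA, jB, hjB, hjAB⟩ := Finset.one_lt_card.mp (show 1 < Sᶜ.card by omega)
  -- the image colours
  set T := S.image (fun l => f (flip jst (flip l x₀))) with hT
  have hparflip2 : ∀ (i j : Fin d) (z : V d), par (flip i (flip j z)) = par z := by
    intro i j z
    rw [par_flip, par_flip, Bool.not_not]
  have hkey : ∀ l ∈ S, ∀ l' ∈ S, l ≠ l' →
      f (flip jst (flip l x₀)) ≠ f (flip jst (flip l' x₀)) := by
    intro l hl l' hl' hne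
    have hu : par (flip jst (flip l x₀)) = b := by rw [hparflip2, hx₀]
    have hd2 := hdist2B (flip jst (flip l x₀)) l l' hu hl hl' hne
    have hrw : flip l' (flip l (flip jst (flip l x₀))) = flip jst (flip l' x₀) := by
      rw [flip_comm l jst (flip l x₀) (fun h => hjst (h ▸ hl)), flip_flip,
        flip_comm l' jst x₀ (fun h => hjst (h ▸ hl'))]
    rw [hrw] at hd2
    exact hd2
  have hTcard : T.card = S.card := by
    rw [hT]
    apply Finset.card_image_of_injOn
    intro l hl l' hl' heq
    by_contra hne
    exact hkey l hl l' hl' hne heq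
  have hparT : ∀ c ∈ T, ∃ u : V d, par u = b ∧ f u = c := by
    intro c hc
    obtain ⟨l, hl, rfl⟩ := Finset.mem_image.mp hc
    exact ⟨flip jst (flip l x₀), by rw [hparflip2, hx₀], rfl⟩
  set c3 := f (flip jB (flip jA y₀)) with hc3
  have hpc3 : par (flip jB (flip jA y₀)) = !b := by rw [hparflip2, hy₀]
  have hc3T : c3 ∉ T := by
    intro hmem
    obtain ⟨u, hu, huc⟩ := hparT c3 hmem
    exact hcross u _ hu hpc3 (huc.trans hc3 ▸ rfl)
  have hc2c3 : f y₀ ≠ c3 := hdist2N y₀ jA jB hy₀ hjA hjB hjAB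
  have hc2T : f y₀ ∉ T := by
    intro hmem
    obtain ⟨u, hu, huc⟩ := hparT _ hmem
    exact hcross u y₀ hu hy₀ huc
  have hc1c2 : f x₀ ≠ f y₀ := hcross x₀ y₀ hx₀ hy₀
  have hc1c3 : f x₀ ≠ c3 := hcross x₀ _ hx₀ hpc3
  have hc1T : f x₀ ∉ T := by
    intro hmem
    obtain ⟨l, hl, heq⟩ := Finset.mem_image.mp hmem
    exact hprop x₀ l jst hx₀ hl hjst heq.symm
  -- assemble
  have hcard : (insert (f x₀) (insert (f y₀) (insert c3 T))).card = S.card + 3 := by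
    rw [Finset.card_insert_of_notMem, Finset.card_insert_of_notMem,
      Finset.card_insert_of_notMem hc3T, hTcard]
    · simp [Finset.mem_insert, hc2c3, hc2T]
    · simp [Finset.mem_insert, hc1c2, hc1c3, hc1T]
  calc S.card + 3 = (insert (f x₀) (insert (f y₀) (insert c3 T))).card := hcard.symm
    _ ≤ (univ : Finset (Fin k)).card := Finset.card_le_univ _
    _ = k := by simp

end StarProof

namespace StarProof
open Finset

variable {d k : ℕ}

lemma no_small_star_coloring (f : V d → Fin k) (hd : 3 ≤ d) (hk : k ≤ (d + 4) / 2)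
    (hstar : IsStarColoring (hypercube d) f) : False := by
  classical
  -- Step 1: pointwise inequality Q_x ≤ mono_x
  have hQle : ∀ x : V d, (sing f x).card + 2 ≤ k := sing_card_le hstar hd hk
  have hpt : ∀ x : V d, (sing f x).card ≤ (mono f x).card := by
    intro x
    have h1 := sing_card_add_mono_card f x
    have h2 := hQle x
    omega
  -- Step 2: global double counting
  have hsum : ∑ x : V d, (mono f x).card ≤ ∑ x : V d, (sing f x).card := by
    rw [sum_mono_eq_sum_inarr f]
    apply Finset.sum_le_sum
    intro x _
    exact Finset.card_le_card (inarr_subset_sing hstar x)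
  have heq : ∀ x : V d, (sing f x).card = (mono f x).card := by
    intro x
    exact pointwise_of_sum_le (fun i _ => hpt i) hsum x (Finset.mem_univ x)
  have hm2 : ∀ x : V d, 2 * (mono f x).card = d := by
    intro x
    have h1 := sing_card_add_mono_card f x
    have h2 := heq x
    omega
  -- Step 3: inarr = sing everywhere
  have hsum2 : ∑ x : V d, (sing f x).card ≤ ∑ x : V d, (inarr f x).card := by
    rw [← sum_mono_eq_sum_inarr f]
    apply Finset.sum_le_sum
    intro x _
    rw [heq x]
  have hinarr : ∀ x : V d, inarr f x = sing f x := by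
    intro x
    apply Finset.eq_of_subset_of_card_le (inarr_subset_sing hstar x)
    have := pointwise_of_sum_le
      (g := fun x : V d => (inarr f x).card) (h := fun x : V d => (sing f x).card)
      (fun i _ => Finset.card_le_card (inarr_subset_sing hstar i)) hsum2 x (Finset.mem_univ x)
    exact le_of_eq (show (sing f x).card = (inarr f x).card from this.symm)
  -- Step 4: value of k and d even
  have hv0 : (fun _ => false : V d) = (fun _ => false : V d) := rfl
  have hkd : k = d / 2 + 2 ∧ d % 2 = 0 := by
    have h1 := hm2 (fun _ => false)
    have h2 := heq (fun _ => false)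
    have h3 := hQle (fun _ => false)
    constructor <;> omega
  -- Step 5: each mono class is monochromatic
  have himg1 : ∀ x : V d, ((mono f x).image f).card = 1 := by
    intro x
    have h1 := image_nbhd_split (f := f) x
    have h2 := image_nbhd_card_le hstar x
    have h3 : 1 ≤ ((mono f x).image f).card := by
      apply Finset.card_pos.mpr
      apply Finset.image_nonempty.mpr
      exact mono_nonempty hstar hd hk x
    have h4 := hm2 x
    have h5 := heq x
    omega
  have hconst : ∀ x : V d, ∀ u ∈ mono f x, ∀ w ∈ mono f x, f u = f w := by
    intro x u hu w hw
    obtain ⟨c, hc⟩ := Finset.card_eq_one.mp (himg1 x)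
    have h1 : f u ∈ (mono f x).image f := Finset.mem_image_of_mem f hu
    have h2 : f w ∈ (mono f x).image f := Finset.mem_image_of_mem f hw
    rw [hc, Finset.mem_singleton] at h1 h2
    rw [h1, h2]
  -- Step 6: global direction set structure
  set A := Dset f (fun _ => false) with hA
  have hglob := Dset_global hinarr hconst hm2
  have hAcard : 2 * A.card = d := by
    rw [hA, Dset_card]
    exact hm2 _
  have hAccard : 2 * Aᶜ.card = d := by
    rw [Finset.card_compl, Fintype.card_fin]
    omega
  have hDbF : ∀ x : V d, par x = false → Dset f x = A := by
    intro x hx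
    rw [hglob x, if_pos hx]
  have hDbT : ∀ x : V d, par x = true → Dset f x = Aᶜ := by
    intro x hx
    rw [hglob x, if_neg (by rw [hx]; simp)]
  -- Step 7: colour invariance on each parity class
  have hconstF : ∀ x y : V d, par x = false → par y = false →
      (∀ j ∈ A, x j = y j) → f x = f y :=
    const_side hinarr hconst hm2 false A hDbF
  have hconstT : ∀ x y : V d, par x = true → par y = true →
      (∀ j ∈ Aᶜ, x j = y j) → f x = f y :=
    const_side hinarr hconst hm2 true Aᶜ hDbT
  -- adapters
  have hCNF : ∀ x y : V d, par x = !false → par y = !false →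
      (∀ j, j ∉ A → x j = y j) → f x = f y := by
    intro x y hx hy hagree
    exact hconstT x y (by simpa using hx) (by simpa using hy)
      (fun j hj => hagree j (Finset.mem_compl.mp hj))
  have hCNT : ∀ x y : V d, par x = !true → par y = !true →
      (∀ j, j ∉ Aᶜ → x j = y j) → f x = f y := by
    intro x y hx hy hagree
    exact hconstF x y (by simpa using hx) (by simpa using hy)
      (fun j hj => hagree j (by simp [hj]))
  -- Step 8: one of the two sides satisfies PropS; both lead to too many colours
  have hA2 : 2 ≤ A.card := by omega
  have hAc2 : 2 ≤ Aᶜ.card := by omega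
  by_cases hP : PropS f false A
  · have hfin := final_side hstar false A hconstF hCNF hP hA2 hAc2
    omega
  · have hP' : PropS f true Aᶜ := by
      by_contra hP2
      exact clash hstar false A hconstF hCNF hP hP2
    have hfin := final_side hstar true Aᶜ hconstT hCNT hP' hAc2 (by rw [compl_compl]; omega)
    omega

end StarProof

/-- For d ≥ 3, the star chromatic number of Q_d is at least ⌈(d+5)/2⌉
(= (d+6)/2 in natural division). -/
theorem stmt9 (d k : ℕ) (hd : 3 ≤ d)
    (hcol : ∃ f : (Fin d → Bool) → Fin k, IsStarColoring (hypercube d) f) :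
    (d + 6) / 2 ≤ k := by
  obtain ⟨f, hstar⟩ := hcol
  by_contra hcon
  push_neg at hcon
  have hk : k ≤ (d + 4) / 2 := by omega
  exact StarProof.no_small_star_coloring f hd hk hstar
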